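/- (Case A.I.1, hybrid CSIT 1.) If N2 < M1 ≤ N1 ≤ M2, then Ph1 = Pi = {(d1,d2) ∈ ℝ² : d1 ≥ 0, 0 ≤ d2 ≤ N2, d1+d2 ≤ M1}. -/

import Mathlib

open Set

noncomputable section

/-- Bound L01 : 0 ≤ d1 ≤ min(M1,N1). -/
def L01 (M1 N1 : ℕ) (d : ℝ × ℝ) : Prop := 0 ≤ d.1 ∧ d.1 ≤ min (M1 : ℝ) (N1 : ℝ)

/-- Bound L02 : 0 ≤ d2 ≤ min(M2,N2). -/
def L02 (M2 N2 : ℕ) (d : ℝ × ℝ) : Prop := 0 ≤ d.2 ∧ d.2 ≤ min (M2 : ℝ) (N2 : ℝ)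

/-- Bound L1 : d1/min(N1+N2,M1) + d2/min(N2,M1) ≤ min(N2,M1+M2)/min(N2,M1). -/
def L1 (M1 M2 N1 N2 : ℕ) (d : ℝ × ℝ) : Prop :=
  d.1 / min ((N1 : ℝ) + (N2 : ℝ)) (M1 : ℝ) + d.2 / min (N2 : ℝ) (M1 : ℝ) ≤
    min (N2 : ℝ) ((M1 : ℝ) + (M2 : ℝ)) / min (N2 : ℝ) (M1 : ℝ)

/-- Bound L2 : d1/min(N1,M2) + d2/min(N1+N2,M2) ≤ min(N1,M1+M2)/min(N1,M2). -/
def L2 (M1 M2 N1 N2 : ℕ) (d : ℝ × ℝ) : Prop :=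
  d.1 / min (N1 : ℝ) (M2 : ℝ) + d.2 / min ((N1 : ℝ) + (N2 : ℝ)) (M2 : ℝ) ≤
    min (N1 : ℝ) ((M1 : ℝ) + (M2 : ℝ)) / min (N1 : ℝ) (M2 : ℝ)

/-- Bound L3 : d1+d2 ≤ min(M1+M2, N1+N2, max(M1,N2), max(M2,N1)). -/
def L3 (M1 M2 N1 N2 : ℕ) (d : ℝ × ℝ) : Prop :=
  d.1 + d.2 ≤
    min (min ((M1 : ℝ) + (M2 : ℝ)) ((N1 : ℝ) + (N2 : ℝ)))
      (min (max (M1 : ℝ) (N2 : ℝ)) (max (M2 : ℝ) (N1 : ℝ)))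

/-- Bound L4 : d1 + d2·(N1+2N2−M2)/N2 ≤ N1+N2. -/
def L4 (M2 N1 N2 : ℕ) (d : ℝ × ℝ) : Prop :=
  d.1 + d.2 * (((N1 : ℝ) + 2 * (N2 : ℝ) - (M2 : ℝ)) / (N2 : ℝ)) ≤ (N1 : ℝ) + (N2 : ℝ)

/-- Bound L5 : d2 + d1·(N2+2N1−M1)/N1 ≤ N1+N2. -/
def L5 (M1 N1 N2 : ℕ) (d : ℝ × ℝ) : Prop :=
  d.2 + d.1 * (((N2 : ℝ) + 2 * (N1 : ℝ) - (M1 : ℝ)) / (N1 : ℝ)) ≤ (N1 : ℝ) + (N2 : ℝ)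

/-- Condition 1 : M1 > N1+N2−M2 > N1 > N2 > M2 > N2(N2−M2)/(N1−M2). -/
def Cond1 (M1 M2 N1 N2 : ℕ) : Prop :=
  (M1 : ℝ) > (N1 : ℝ) + (N2 : ℝ) - (M2 : ℝ) ∧
  (N1 : ℝ) + (N2 : ℝ) - (M2 : ℝ) > (N1 : ℝ) ∧
  (N1 : ℝ) > (N2 : ℝ) ∧ (N2 : ℝ) > (M2 : ℝ) ∧
  (M2 : ℝ) > (N2 : ℝ) * ((N2 : ℝ) - (M2 : ℝ)) / ((N1 : ℝ) - (M2 : ℝ))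

/-- Condition 2 : M2 > N1+N2−M1 > N2 > N1 > M1 > N1(N1−M1)/(N2−M1). -/
def Cond2 (M1 M2 N1 N2 : ℕ) : Prop :=
  (M2 : ℝ) > (N1 : ℝ) + (N2 : ℝ) - (M1 : ℝ) ∧
  (N1 : ℝ) + (N2 : ℝ) - (M1 : ℝ) > (N2 : ℝ) ∧
  (N2 : ℝ) > (N1 : ℝ) ∧ (N1 : ℝ) > (M1 : ℝ) ∧
  (M1 : ℝ) > (N1 : ℝ) * ((N1 : ℝ) - (M1 : ℝ)) / ((N2 : ℝ) - (M1 : ℝ))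

/-- DoF outer-bound region under perfect and instantaneous CSIT. -/
def Pinst (M1 M2 N1 N2 : ℕ) : Set (ℝ × ℝ) :=
  {d | L01 M1 N1 d ∧ L02 M2 N2 d ∧ L3 M1 M2 N1 N2 d}

/-- DoF outer-bound region under hybrid CSIT 1. -/
def Ph1 (M1 M2 N1 N2 : ℕ) : Set (ℝ × ℝ) :=
  {d | L01 M1 N1 d ∧ L02 M2 N2 d ∧ L2 M1 M2 N1 N2 d ∧ L3 M1 M2 N1 N2 d ∧
    (Cond2 M1 M2 N1 N2 → L5 M1 N1 N2 d)}

/-- DoF outer-bound region under hybrid CSIT 2. -/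
def Ph2 (M1 M2 N1 N2 : ℕ) : Set (ℝ × ℝ) :=
  {d | L01 M1 N1 d ∧ L02 M2 N2 d ∧ L1 M1 M2 N1 N2 d ∧ L3 M1 M2 N1 N2 d ∧
    (Cond1 M1 M2 N1 N2 → L4 M2 N1 N2 d)}

/-- DoF outer-bound region under delayed CSIT. -/
def Pd (M1 M2 N1 N2 : ℕ) : Set (ℝ × ℝ) :=
  {d | L01 M1 N1 d ∧ L02 M2 N2 d ∧ L1 M1 M2 N1 N2 d ∧ L2 M1 M2 N1 N2 d ∧
    L3 M1 M2 N1 N2 d ∧ (Cond1 M1 M2 N1 N2 → L4 M2 N1 N2 d) ∧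
    (Cond2 M1 M2 N1 N2 → L5 M1 N1 N2 d)}

/-- Case A.I.1, hybrid CSIT 1: if N2 < M1 ≤ N1 ≤ M2, then
Ph1 = Pi = {(d1,d2) : d1 ≥ 0, 0 ≤ d2 ≤ N2, d1+d2 ≤ M1}. -/
theorem caseAI1_h1 (M1 M2 N1 N2 : ℕ)
    (hM1 : 0 < M1) (hM2 : 0 < M2) (hN1 : 0 < N1) (hN2 : 0 < N2)
    (h1 : N2 < M1) (h2 : M1 ≤ N1) (h3 : N1 ≤ M2) :
    Ph1 M1 M2 N1 N2 = Pinst M1 M2 N1 N2 ∧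
    Pinst M1 M2 N1 N2 =
      {d : ℝ × ℝ | 0 ≤ d.1 ∧ 0 ≤ d.2 ∧ d.2 ≤ (N2 : ℝ) ∧ d.1 + d.2 ≤ (M1 : ℝ)} := by
  have c1 : (N2:ℝ) < M1 := by exact_mod_cast h1
  have c2 : (M1:ℝ) ≤ N1 := by exact_mod_cast h2
  have c3 : (N1:ℝ) ≤ M2 := by exact_mod_cast h3
  have cN1 : (0:ℝ) < N1 := by exact_mod_cast hN1
  have cN2 : (0:ℝ) < N2 := by exact_mod_cast hN2
  have cM1 : (0:ℝ) < M1 := by exact_mod_cast hM1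
  have cM2 : (0:ℝ) < M2 := by exact_mod_cast hM2
  have hmin1 : min ((M1:ℝ)) (N1:ℝ) = (M1:ℝ) := min_eq_left c2
  have hmin2 : min ((M2:ℝ)) (N2:ℝ) = (N2:ℝ) := min_eq_right (by linarith)
  have hmax1 : max ((M1:ℝ)) (N2:ℝ) = (M1:ℝ) := max_eq_left (by linarith)
  have hmax2 : max ((M2:ℝ)) (N1:ℝ) = (M2:ℝ) := max_eq_left c3
  have hL3 : ∀ d : ℝ × ℝ, L3 M1 M2 N1 N2 d ↔ d.1 + d.2 ≤ (M1:ℝ) := by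
    intro d
    unfold L3
    rw [hmax1, hmax2]
    constructor
    · intro h
      have := h.trans (min_le_right _ _)
      have := this.trans (min_le_left _ _)
      linarith
    · intro h
      refine le_min (le_min (by linarith) (by linarith)) (le_min (by linarith) (by linarith))
  have hnotC2 : ¬ Cond2 M1 M2 N1 N2 := by
    rintro ⟨-, -, h5, h6, -⟩
    linarith
  constructor
  · ext d
    simp only [Ph1, Pinst, Set.mem_setOf_eq]
    constructor
    · rintro ⟨a, b, _, c, _⟩
      exact ⟨a, b, c⟩
    · rintro ⟨⟨ha0, ha1⟩, ⟨hb0, hb1⟩, hc⟩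
      refine ⟨⟨ha0, ha1⟩, ⟨hb0, hb1⟩, ?_, hc, fun h => absurd h hnotC2⟩
      -- L2
      unfold L2
      have e1 : min ((N1:ℝ)) (M2:ℝ) = (N1:ℝ) := min_eq_left c3
      have e2 : min ((N1:ℝ)) ((M1:ℝ) + (M2:ℝ)) = (N1:ℝ) := min_eq_left (by linarith)
      rw [e1, e2]
      have hm : (N1:ℝ) ≤ min ((N1:ℝ) + (N2:ℝ)) (M2:ℝ) := le_min (by linarith) c3
      have hmpos : (0:ℝ) < min ((N1:ℝ) + (N2:ℝ)) (M2:ℝ) := lt_of_lt_of_le cN1 hm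
      have hsum : d.1 + d.2 ≤ (M1:ℝ) := (hL3 d).1 hc
      have h2' : d.2 / min ((N1:ℝ) + (N2:ℝ)) (M2:ℝ) ≤ d.2 / N1 :=
        div_le_div_of_nonneg_left hb0 cN1 hm
      have h1' : d.1 / N1 + d.2 / N1 ≤ 1 := by
        rw [← add_div, div_le_one cN1]
        linarith
      rw [div_self (ne_of_gt cN1)]
      linarith
  · ext d
    simp only [Pinst, Set.mem_setOf_eq]
    unfold L01 L02
    rw [hmin1, hmin2, hL3]
    constructor
    · rintro ⟨⟨a, _⟩, ⟨b, c⟩, e⟩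
      exact ⟨a, b, c, e⟩
    · rintro ⟨a, b, c, e⟩
      exact ⟨⟨a, by linarith⟩, ⟨b, c⟩, e⟩
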